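/- Let X be a metric space, g an isometry of X, and x ∈ X such that n ↦ gⁿ(x) is a (K,C)-quasi-isometric embedding of ℤ into X. Let γ₀ : [0,1] → X be a constant-speed geodesic from x to g(x), i.e. γ₀(0) = x, γ₀(1) = g(x), and d(γ₀(s), γ₀(t)) = |s − t|·d(x, g(x)) for all s,t ∈ [0,1]. Define γ : ℝ → X by γ(t) = g^{⌊t⌋}(γ₀(t − ⌊t⌋)), where ⌊t⌋ is the greatest integer ≤ t. Then γ is continuous, satisfies g(γ(t)) = γ(t+1) for all t (so its image is invariant under g), and γ is a (K',C')-quasi-isometric embedding of ℝ into X for some K' ≥ 1 and C' ≥ 0. -/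

import Mathlib

/-- a hyperbolic isometry `g` of a metric space `X` has a continuous
`⟨g⟩`-invariant quasi-axis, built from a geodesic segment from `x` to `g(x)`. -/
theorem stmt_17 (X : Type) [MetricSpace X]
    (g : Equiv.Perm X) (hg : Isometry (g : X → X)) (x : X)
    (K C : ℝ) (hK : 1 ≤ K) (hC : 0 ≤ C)
    -- n ↦ gⁿ(x) is a (K,C)-quasi-isometric embedding of ℤ into X
    (horb : ∀ m n : ℤ, |(m : ℝ) - (n : ℝ)| / K - C ≤ dist ((g ^ m) x) ((g ^ n) x) ∧
      dist ((g ^ m) x) ((g ^ n) x) ≤ K * |(m : ℝ) - (n : ℝ)| + C)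
    -- γ₀ is a constant-speed geodesic from x to g(x)
    (γ₀ : ℝ → X) (h0 : γ₀ 0 = x) (h1 : γ₀ 1 = g x)
    (hgeo : ∀ s ∈ Set.Icc (0:ℝ) 1, ∀ t ∈ Set.Icc (0:ℝ) 1,
      dist (γ₀ s) (γ₀ t) = |s - t| * dist x (g x)) :
    -- γ(t) = g^⌊t⌋(γ₀(t − ⌊t⌋)) is continuous,
    Continuous (fun t : ℝ => (g ^ ⌊t⌋) (γ₀ (t - ⌊t⌋))) ∧
    -- its image is g-invariant: g(γ(t)) = γ(t+1),
    (∀ t : ℝ, g ((g ^ ⌊t⌋) (γ₀ (t - ⌊t⌋))) = (g ^ ⌊t + 1⌋) (γ₀ ((t + 1) - ⌊t + 1⌋))) ∧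
    -- and it is a (K',C')-quasi-isometric embedding of ℝ into X
    (∃ K' C' : ℝ, 1 ≤ K' ∧ 0 ≤ C' ∧ ∀ s t : ℝ,
      |s - t| / K' - C' ≤ dist ((g ^ ⌊s⌋) (γ₀ (s - ⌊s⌋))) ((g ^ ⌊t⌋) (γ₀ (t - ⌊t⌋))) ∧
      dist ((g ^ ⌊s⌋) (γ₀ (s - ⌊s⌋))) ((g ^ ⌊t⌋) (γ₀ (t - ⌊t⌋))) ≤ K' * |s - t| + C') := by
  set D : ℝ := dist x (g x) with hD
  have hD0 : 0 ≤ D := dist_nonneg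
  -- every integer power of g is an isometry
  have hinv : ∀ a b : X, dist (g⁻¹ a) (g⁻¹ b) = dist a b := by
    intro a b
    calc dist (g⁻¹ a) (g⁻¹ b) = dist (g (g⁻¹ a)) (g (g⁻¹ b)) := (hg.dist_eq _ _).symm
      _ = dist a b := by rw [Equiv.Perm.coe_inv, Equiv.apply_symm_apply, Equiv.apply_symm_apply]
  have hiso : ∀ (n : ℤ) (a b : X), dist ((g ^ n) a) ((g ^ n) b) = dist a b := by
    intro n
    induction n using Int.induction_on with
    | zero => simp
    | succ k ih =>
      intro a b
      rw [zpow_add_one]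
      simp only [Equiv.Perm.mul_apply]
      rw [ih, hg.dist_eq]
    | pred k ih =>
      intro a b
      rw [zpow_sub_one]
      simp only [Equiv.Perm.mul_apply]
      rw [ih, hinv]
  have hfl : ∀ u : ℝ, 0 ≤ u - ⌊u⌋ ∧ u - ⌊u⌋ < 1 := fun u =>
    ⟨by linarith [Int.floor_le u], by linarith [Int.lt_floor_add_one u]⟩
  -- D is controlled by K, C
  have hDKC : D ≤ K + C := by
    have := (horb 1 0).2
    simp only [zpow_one, zpow_zero, Equiv.Perm.one_apply] at this
    rw [dist_comm] at this
    simpa using this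
  -- local Lipschitz estimate
  have hlip : ∀ s t : ℝ, s ≤ t → t - s ≤ 1 →
      dist ((g ^ ⌊s⌋) (γ₀ (s - ⌊s⌋))) ((g ^ ⌊t⌋) (γ₀ (t - ⌊t⌋))) ≤ D * (t - s) := by
    intro s t hst h1'
    obtain ⟨hs0, hs1⟩ := hfl s
    obtain ⟨ht0, ht1⟩ := hfl t
    have hmn : ⌊s⌋ ≤ ⌊t⌋ := Int.floor_le_floor hst
    have hmn' : ⌊t⌋ ≤ ⌊s⌋ + 1 := by
      have h2 : t ≤ s + 1 := by linarith
      calc ⌊t⌋ ≤ ⌊s + 1⌋ := Int.floor_le_floor h2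
        _ = ⌊s⌋ + 1 := Int.floor_add_one s
    rcases eq_or_lt_of_le hmn with h | h
    · rw [← h, hiso,
        hgeo (s - ⌊s⌋) ⟨hs0, hs1.le⟩ (t - ⌊s⌋) (by rw [h]; exact ⟨ht0, ht1.le⟩)]
      have : |s - ↑⌊s⌋ - (t - ↑⌊s⌋)| = t - s := by
        rw [show s - ↑⌊s⌋ - (t - ↑⌊s⌋) = -(t - s) by ring, abs_neg,
          abs_of_nonneg (by linarith)]
      rw [this, mul_comm]
    · have he : ⌊t⌋ = ⌊s⌋ + 1 := le_antisymm hmn' h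
      have hec : (⌊t⌋ : ℝ) = (⌊s⌋ : ℝ) + 1 := by exact_mod_cast he
      have key : (g ^ ⌊s⌋) (γ₀ 1) = (g ^ ⌊t⌋) (γ₀ 0) := by
        rw [h0, h1, he, zpow_add_one]
        simp only [Equiv.Perm.mul_apply]
      have d1 : dist ((g ^ ⌊s⌋) (γ₀ (s - ⌊s⌋))) ((g ^ ⌊s⌋) (γ₀ 1)) = (↑⌊s⌋ + 1 - s) * D := by
        rw [hiso, hgeo (s - ⌊s⌋) ⟨hs0, hs1.le⟩ 1 ⟨zero_le_one, le_refl 1⟩,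
          show s - ↑⌊s⌋ - 1 = -(↑⌊s⌋ + 1 - s) by ring, abs_neg,
          abs_of_nonneg (by linarith)]
      have d2 : dist ((g ^ ⌊s⌋) (γ₀ 1)) ((g ^ ⌊t⌋) (γ₀ (t - ⌊t⌋))) = (t - ↑⌊s⌋ - 1) * D := by
        rw [key, hiso, hgeo 0 ⟨le_refl 0, zero_le_one⟩ (t - ⌊t⌋) ⟨ht0, ht1.le⟩,
          show (0 : ℝ) - (t - ↑⌊t⌋) = -(t - ↑⌊t⌋) by ring, abs_neg,
          abs_of_nonneg ht0, hec]
        ring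
      calc dist ((g ^ ⌊s⌋) (γ₀ (s - ⌊s⌋))) ((g ^ ⌊t⌋) (γ₀ (t - ⌊t⌋)))
          ≤ dist ((g ^ ⌊s⌋) (γ₀ (s - ⌊s⌋))) ((g ^ ⌊s⌋) (γ₀ 1)) +
            dist ((g ^ ⌊s⌋) (γ₀ 1)) ((g ^ ⌊t⌋) (γ₀ (t - ⌊t⌋))) := dist_triangle _ _ _
        _ = D * (t - s) := by rw [d1, d2]; ring
  refine ⟨?_, ?_, ?_⟩
  · -- continuity
    rw [Metric.continuous_iff]
    intro b ε hε
    have hD1 : (0 : ℝ) < D + 1 := by positivity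
    refine ⟨min 1 (ε / (D + 1)), lt_min one_pos (by positivity), ?_⟩
    intro a hab
    rw [Real.dist_eq] at hab
    have h1' : |a - b| < 1 := lt_of_lt_of_le hab (min_le_left _ _)
    have h2' : |a - b| < ε / (D + 1) := lt_of_lt_of_le hab (min_le_right _ _)
    have h3 := le_abs_self (a - b)
    have h4 := neg_abs_le (a - b)
    have hd : dist ((g ^ ⌊a⌋) (γ₀ (a - ⌊a⌋))) ((g ^ ⌊b⌋) (γ₀ (b - ⌊b⌋))) ≤ D * |a - b| := by
      rcases le_total a b with h | h
      · have := hlip a b h (by linarith)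
        have hba : b - a ≤ |a - b| := by linarith
        nlinarith
      · have := hlip b a h (by linarith)
        rw [dist_comm] at this
        have hba : a - b ≤ |a - b| := by linarith
        nlinarith
    have habs0 := abs_nonneg (a - b)
    have heq : ε / (D + 1) * (D + 1) = ε := div_mul_cancel₀ ε hD1.ne'
    nlinarith
  · -- invariance
    intro t
    have h2 : t + 1 - ((⌊t⌋ + 1 : ℤ) : ℝ) = t - ⌊t⌋ := by push_cast; ring
    rw [Int.floor_add_one, h2,
      show (g : Equiv.Perm X) ^ (⌊t⌋ + 1) = g * g ^ ⌊t⌋ by rw [add_comm, zpow_add, zpow_one],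
      Equiv.Perm.mul_apply]
  · -- quasi-isometric embedding
    have hbase : ∀ t : ℝ, dist ((g ^ ⌊t⌋) (γ₀ (t - ⌊t⌋))) ((g ^ ⌊t⌋) x) ≤ D := by
      intro t
      obtain ⟨ht0, ht1⟩ := hfl t
      rw [← h0, hiso, hgeo (t - ⌊t⌋) ⟨ht0, ht1.le⟩ 0 ⟨le_refl 0, zero_le_one⟩,
        sub_zero, abs_of_nonneg ht0]
      nlinarith
    refine ⟨K, 3 * K + 3 * C + 1, hK, by linarith, ?_⟩
    intro s t
    obtain ⟨hs0, hs1⟩ := hfl s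
    obtain ⟨ht0, ht1⟩ := hfl t
    obtain ⟨hlo, hhi⟩ := horb ⌊s⌋ ⌊t⌋
    have hb1 := hbase s
    have hb2 := hbase t
    have h3 := le_abs_self (s - t)
    have h4 := neg_abs_le (s - t)
    have h5 := le_abs_self ((⌊s⌋ : ℝ) - (⌊t⌋ : ℝ))
    have h6 := neg_abs_le ((⌊s⌋ : ℝ) - (⌊t⌋ : ℝ))
    have e1 : |(⌊s⌋ : ℝ) - (⌊t⌋ : ℝ)| ≤ |s - t| + 1 := by
      rw [abs_le]; constructor <;> linarith
    have e2 : |s - t| ≤ |(⌊s⌋ : ℝ) - (⌊t⌋ : ℝ)| + 1 := by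
      rw [abs_le]; constructor <;> linarith
    have tri1 : dist ((g ^ ⌊s⌋) (γ₀ (s - ⌊s⌋))) ((g ^ ⌊t⌋) (γ₀ (t - ⌊t⌋))) ≤
        dist ((g ^ ⌊s⌋) (γ₀ (s - ⌊s⌋))) ((g ^ ⌊s⌋) x) + dist ((g ^ ⌊s⌋) x) ((g ^ ⌊t⌋) x) +
        dist ((g ^ ⌊t⌋) x) ((g ^ ⌊t⌋) (γ₀ (t - ⌊t⌋))) := dist_triangle4 _ _ _ _
    have tri2 : dist ((g ^ ⌊s⌋) x) ((g ^ ⌊t⌋) x) ≤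
        dist ((g ^ ⌊s⌋) x) ((g ^ ⌊s⌋) (γ₀ (s - ⌊s⌋))) +
        dist ((g ^ ⌊s⌋) (γ₀ (s - ⌊s⌋))) ((g ^ ⌊t⌋) (γ₀ (t - ⌊t⌋))) +
        dist ((g ^ ⌊t⌋) (γ₀ (t - ⌊t⌋))) ((g ^ ⌊t⌋) x) := dist_triangle4 _ _ _ _
    rw [dist_comm ((g ^ ⌊t⌋) x)] at tri1
    have hc1 : dist ((g ^ ⌊s⌋) x) ((g ^ ⌊s⌋) (γ₀ (s - ⌊s⌋))) =
        dist ((g ^ ⌊s⌋) (γ₀ (s - ⌊s⌋))) ((g ^ ⌊s⌋) x) := dist_comm _ _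
    rw [hc1] at tri2
    have hK0 : (0 : ℝ) < K := by linarith
    have hdivK : (1 : ℝ) / K ≤ 1 := by
      rw [div_le_one hK0]; exact hK
    have hdiv2 : |s - t| / K ≤ |(⌊s⌋ : ℝ) - (⌊t⌋ : ℝ)| / K + 1 / K := by
      rw [← add_div]
      gcongr
    constructor
    · -- lower bound
      linarith
    · -- upper bound
      have habs0 := abs_nonneg (s - t)
      nlinarith
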